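/- Let G be a graph in which every two distinct maximal cliques are disjoint (equivalently, G contains no induced copy of K_3 minus an edge). Then any m independent sets of size n (with m ≤ n) in G admit a rainbow independent m-set. -/

import Mathlib

open SimpleGraph Finset

/-- `S` is an independent set in `G`. -/
def IndepIn {V : Type*} (G : SimpleGraph V) (S : Finset V) : Prop :=
  ∀ u ∈ S, ∀ v ∈ S, ¬ G.Adj u v

/-- The family `I` admits a rainbow independent `m`-set in `G`: `m` distinct pairwise
non-adjacent vertices, each chosen from a distinct member of the family. -/
def HasRainbowIndep {V ι : Type*} (G : SimpleGraph V) (I : ι → Finset V) (m : ℕ) : Prop :=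
  ∃ (j : Fin m → ι) (v : Fin m → V), Function.Injective j ∧ Function.Injective v ∧
    (∀ i, v i ∈ I (j i)) ∧ ∀ i i' : Fin m, i ≠ i' → ¬ G.Adj (v i) (v i')

/-- `G` contains no induced copy of `H`. -/
def IndFree {V W : Type*} (G : SimpleGraph V) (H : SimpleGraph W) : Prop :=
  ¬ ∃ f : W ↪ V, ∀ a b : W, G.Adj (f a) (f b) ↔ H.Adj a b

lemma adj_trans_of_free {V : Type*} (G : SimpleGraph V)
    (hfree : IndFree G (SimpleGraph.pathGraph 3)) {a b c : V}
    (hab : G.Adj a b) (hbc : G.Adj b c) (hac : a ≠ c) : G.Adj a c := by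
  by_contra h
  apply hfree
  have hab' := hab.ne
  have hbc' := hbc.ne
  refine ⟨⟨![a, b, c], ?_⟩, ?_⟩
  · intro i j hij
    fin_cases i <;> fin_cases j <;> simp_all [Matrix.cons_val_zero, Matrix.cons_val_one] <;>
      first | rfl | (exfalso; exact hac hij.symm) | (exfalso; exact hab' hij) |
        (exfalso; exact hab' hij.symm) | (exfalso; exact hbc' hij) |
        (exfalso; exact hbc' hij.symm) | (exfalso; exact hac hij)
  · intro i j
    show G.Adj (![a, b, c] i) (![a, b, c] j) ↔ _
    fin_cases i <;> fin_cases j <;>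
      simp [SimpleGraph.pathGraph_adj, hab, hbc, hab.symm, hbc.symm, h,
        fun h' => h (G.adj_symm h'), G.irrefl]
    · exact fun h' => h (G.adj_symm h')

theorem K3_minus_free_rainbow {V : Type*} (G : SimpleGraph V) (m n : ℕ) (hmn : m ≤ n)
    (hfree : IndFree G (SimpleGraph.pathGraph 3))
    (I : Fin m → Finset V) (hI : ∀ i, (I i).card = n ∧ IndepIn G (I i)) :
    HasRainbowIndep G I m := by
  classical
  -- equivalence relation: same clique
  let r : V → V → Prop := fun u v => u = v ∨ G.Adj u v
  have hr : Equivalence r := by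
    constructor
    · intro x; exact Or.inl rfl
    · rintro x y (rfl | h); exact Or.inl rfl; exact Or.inr h.symm
    · rintro x y z (rfl | hxy) (rfl | hyz)
      · exact Or.inl rfl
      · exact Or.inr hyz
      · exact Or.inr hxy
      · by_cases hxz : x = z
        · exact Or.inl hxz
        · exact Or.inr (adj_trans_of_free G hfree hxy hyz hxz)
  let s : Setoid V := ⟨r, hr⟩
  let q : V → Quotient s := fun v => Quotient.mk s v
  have hq : ∀ u v, q u = q v ↔ r u v := fun u v => Quotient.eq''
  let t : Fin m → Finset (Quotient s) := fun i => (I i).image q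
  have htcard : ∀ i, (t i).card = n := by
    intro i
    rw [Finset.card_image_of_injOn, (hI i).1]
    intro u hu v hv huv
    rcases (hq u v).1 huv with h | h
    · exact h
    · exact absurd h ((hI i).2 u hu v hv)
  have hall : ∀ S : Finset (Fin m), S.card ≤ (S.biUnion t).card := by
    intro S
    rcases S.eq_empty_or_nonempty with rfl | ⟨i, hi⟩
    · simp
    · calc S.card ≤ m := by simpa using Finset.card_le_card (Finset.subset_univ S)
        _ ≤ n := hmn
        _ = (t i).card := (htcard i).symm
        _ ≤ (S.biUnion t).card :=
          Finset.card_le_card (Finset.subset_biUnion_of_mem t hi)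
  obtain ⟨f, hfinj, hf⟩ := (Finset.all_card_le_biUnion_card_iff_existsInjective' t).1 hall
  choose v hv hqv using fun i => Finset.mem_image.1 (hf i)
  refine ⟨id, v, Function.injective_id, ?_, hv, ?_⟩
  · intro i i' h
    apply hfinj
    rw [← hqv i, ← hqv i', h]
  · intro i i' hne hadj
    apply hne
    apply hfinj
    rw [← hqv i, ← hqv i']
    exact (hq _ _).2 (Or.inr hadj)
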